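/- The relation ⊐_ℓ is well-founded for every fixed ℓ ≥ 1; consequently the maximal reduction length G_ℓ(a) = max{ k ∈ ℕ ∣ ∃ a₁,…,a_k with a ⊐_ℓ a₁ ⊐_ℓ ⋯ ⊐_ℓ a_k } is well-defined (finite) for every term or sequence a. -/

import Mathlib

/-- First-order terms over a signature `F` and variables `V` (variadic). -/
inductive Tm (F V : Type) : Type
  | var : V → Tm F V
  | app : F → List (Tm F V) → Tm F V

/-- Proper subterm relation: `PSub s t` means `s` is a proper subterm of `t`. -/
inductive PSub {F V : Type} : Tm F V → Tm F V → Prop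
  | arg {f : F} {ts : List (Tm F V)} {t : Tm F V} : t ∈ ts → PSub t (Tm.app f ts)
  | trans {f : F} {ts : List (Tm F V)} {s t : Tm F V} : t ∈ ts → PSub s t → PSub s (Tm.app f ts)

/-- Terms or sequences of terms. -/
abbrev TS (F V : Type) := Tm F V ⊕ List (Tm F V)

/-- The order `⊐_ℓ` on terms and sequences of terms, given a precedence `prec`. -/
inductive Spl {F V : Type} (prec : F → F → Prop) (ℓ : ℕ) : TS F V → TS F V → Prop
  | st {f g : F} {ss ts : List (Tm F V)} :
      prec f g → (∀ t ∈ ts, PSub t (Tm.app f ss)) → ts.length ≤ ℓ →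
      Spl prec ℓ (Sum.inl (Tm.app f ss)) (Sum.inl (Tm.app g ts))
  | sb {f : F} {ss ts : List (Tm F V)} :
      (∀ t ∈ ts, Spl prec ℓ (Sum.inl (Tm.app f ss)) (Sum.inl t)) → ts.length ≤ ℓ →
      Spl prec ℓ (Sum.inl (Tm.app f ss)) (Sum.inr ts)
  | ab {ss ts : List (Tm F V)} (bs : List (List (Tm F V)))
      (i : ℕ) (s : Tm F V) (b : List (Tm F V)) :
      bs.length = ss.length →
      bs.flatten.Perm ts →
      (∀ (j : ℕ) s' b', ss[j]? = some s' → bs[j]? = some b' →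
        b' ≠ [s'] → Spl prec ℓ (Sum.inl s') (Sum.inr b')) →
      ss[i]? = some s → bs[i]? = some b →
      Spl prec ℓ (Sum.inl s) (Sum.inr b) →
      Spl prec ℓ (Sum.inr ss) (Sum.inr ts)

/-- `ChainLen R a n`: there is an `R`-descending chain of length `n` starting at `a`. -/
def ChainLen {α : Type*} (R : α → α → Prop) (a : α) (n : ℕ) : Prop :=
  ∃ f : ℕ → α, f 0 = a ∧ ∀ i < n, R (f i) (f (i + 1))

/-! ### Auxiliary material: a strictly decreasing ℕ-valued measure for `Spl`. -/

/-- Rank of a symbol: the number of symbols strictly below it in the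
transitive closure of the precedence. -/
noncomputable def rho {F : Type} (prec : F → F → Prop) (f : F) : ℕ :=
  {g | Relation.TransGen prec f g}.ncard

lemma rho_lt {F : Type} [Finite F] {prec : F → F → Prop} (hprec : WellFounded prec)
    {f g : F} (h : prec f g) : rho prec g < rho prec f := by
  apply Set.ncard_lt_ncard _ (Set.toFinite _)
  have hsub : {x | Relation.TransGen prec g x} ⊆ {x | Relation.TransGen prec f x} :=
    fun x hx => Relation.TransGen.head h hx
  exact (Set.ssubset_iff_of_subset hsub).mpr
    ⟨g, Relation.TransGen.single h, fun hgg => (hprec.transGen).asymmetric _ _ hgg hgg⟩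

/-- Measure of a term: `(ℓ+1)^(rank of head symbol)`. -/
noncomputable def mTm {F V : Type} (prec : F → F → Prop) (ℓ : ℕ) : Tm F V → ℕ
  | .var _ => 0
  | .app f _ => (ℓ + 1) ^ rho prec f

/-- Measure of a term or sequence. -/
noncomputable def mTS {F V : Type} (prec : F → F → Prop) (ℓ : ℕ) : TS F V → ℕ
  | .inl t => mTm prec ℓ t
  | .inr ts => (ts.map (mTm prec ℓ)).sum

lemma listSum_le {α β : Type*} (f : α → ℕ) (g : β → ℕ) :
    ∀ (l1 : List α) (l2 : List β), l2.length = l1.length →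
    (∀ (j : ℕ) a b, l1[j]? = some a → l2[j]? = some b → g b ≤ f a) →
    (l2.map g).sum ≤ (l1.map f).sum := by
  intro l1
  induction l1 with
  | nil => intro l2 hlen _; simp_all [List.length_eq_zero_iff.mp hlen]
  | cons a t1 ih =>
    intro l2 hlen hle
    cases l2 with
    | nil => simp
    | cons b t2 =>
      simp only [List.map_cons, List.sum_cons]
      have h0 := hle 0 a b (by simp) (by simp)
      have ht := ih t2 (by simpa using hlen) (fun j x y hx hy => hle (j+1) x y (by simpa) (by simpa))
      omega

lemma listSum_lt {α β : Type*} (f : α → ℕ) (g : β → ℕ) :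
    ∀ (l1 : List α) (i : ℕ) (l2 : List β), l2.length = l1.length →
    (∀ (j : ℕ) a b, l1[j]? = some a → l2[j]? = some b → g b ≤ f a) →
    ∀ a b, l1[i]? = some a → l2[i]? = some b → g b < f a →
    (l2.map g).sum < (l1.map f).sum := by
  intro l1
  induction l1 with
  | nil => intro i l2 _ _ a b ha; simp at ha
  | cons x t1 ih =>
    intro i l2 hlen hle a b ha hb hlt
    cases l2 with
    | nil => simp at hlen
    | cons y t2 =>
      simp only [List.map_cons, List.sum_cons]
      cases i with
      | zero =>
        simp only [List.getElem?_cons_zero, Option.some.injEq] at ha hb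
        subst ha; subst hb
        have ht := listSum_le f g t1 t2 (by simpa using hlen)
          (fun j u v hu hv => hle (j+1) u v (by simpa) (by simpa))
        omega
      | succ k =>
        have h0 := hle 0 x y (by simp) (by simp)
        have ht := ih k t2 (by simpa using hlen)
          (fun j u v hu hv => hle (j+1) u v (by simpa) (by simpa))
          a b (by simpa using ha) (by simpa using hb) hlt
        omega

/-- The measure strictly decreases along `Spl`. -/
lemma spl_measure {F V : Type} [Finite F] {prec : F → F → Prop} (hprec : WellFounded prec)
    {ℓ : ℕ} (hℓ : 1 ≤ ℓ) {a b : TS F V} (h : Spl prec ℓ a b) :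
    mTS prec ℓ b < mTS prec ℓ a := by
  induction h with
  | @st f g ss ts hfg hsub hlen =>
    show (ℓ + 1) ^ rho prec g < (ℓ + 1) ^ rho prec f
    exact Nat.pow_lt_pow_right (by omega) (rho_lt hprec hfg)
  | @sb f ss ts h hlen ih =>
    show (ts.map (mTm prec ℓ)).sum < (ℓ + 1) ^ rho prec f
    have hb : ∀ t ∈ ts, (ℓ + 1) * mTm prec ℓ t ≤ (ℓ + 1) ^ rho prec f := by
      intro t ht
      cases h t ht with
      | @st _ g _ ts' hfg hsub' hlen' =>
        show (ℓ + 1) * (ℓ + 1) ^ rho prec g ≤ (ℓ + 1) ^ rho prec f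
        calc (ℓ + 1) * (ℓ + 1) ^ rho prec g = (ℓ + 1) ^ (rho prec g + 1) := by ring
          _ ≤ (ℓ + 1) ^ rho prec f := Nat.pow_le_pow_right (by omega) (rho_lt hprec hfg)
    set X := (ℓ + 1) ^ rho prec f with hX
    have hXpos : 0 < X := Nat.pow_pos (by omega)
    have h1 : (ℓ + 1) * (ts.map (mTm prec ℓ)).sum ≤ ts.length * X := by
      have : (ts.map (fun t => (ℓ + 1) * mTm prec ℓ t)).sum ≤ (ts.map (fun t => (ℓ + 1) * mTm prec ℓ t)).length • X :=
        List.sum_le_card_nsmul _ _ (by intro x hx; simp only [List.mem_map] at hx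
                                       obtain ⟨t, ht, rfl⟩ := hx; exact hb t ht)
      simpa [List.sum_map_mul_left, List.sum_map_mul_right, smul_eq_mul, mul_comm] using this
    have h2 : ts.length * X ≤ ℓ * X := Nat.mul_le_mul_right X hlen
    have h3 : (ℓ + 1) * (ts.map (mTm prec ℓ)).sum < (ℓ + 1) * X := by
      have : ℓ * X < (ℓ + 1) * X := by nlinarith
      omega
    exact Nat.lt_of_mul_lt_mul_left h3
  | @ab ss ts bs i s b hlen hperm hall hsi hbi hspl ihall ih =>
    show (ts.map (mTm prec ℓ)).sum < (ss.map (mTm prec ℓ)).sum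
    have hts : (ts.map (mTm prec ℓ)).sum = (bs.map (fun b' => (b'.map (mTm prec ℓ)).sum)).sum := by
      rw [← (hperm.map (mTm prec ℓ)).sum_eq, List.map_flatten, List.sum_flatten, List.map_map]
      rfl
    rw [hts]
    apply listSum_lt (mTm prec ℓ) (fun b' => (b'.map (mTm prec ℓ)).sum) ss i bs hlen ?_ s b hsi hbi ih
    intro j s' b' hs' hb'
    by_cases hcase : b' = [s']
    · subst hcase; simp
    · exact le_of_lt (ihall j s' b' hs' hb' hcase)

/-- `⊐_ℓ` is well-founded for every fixed `ℓ ≥ 1`; consequently the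
maximal reduction length from any term or sequence is well-defined (finite). -/
theorem spl_wellFounded_and_finite_chains {F V : Type} [Finite F] [Finite V]
    (prec : F → F → Prop) (hprec : WellFounded prec) (ℓ : ℕ) (hℓ : 1 ≤ ℓ) :
    WellFounded (fun a b : TS F V => Spl prec ℓ b a) ∧
    ∀ a : TS F V, ∃ N : ℕ, ∀ n, ChainLen (Spl prec ℓ) a n → n ≤ N := by
  have key : ∀ {a b : TS F V}, Spl prec ℓ a b → mTS prec ℓ b < mTS prec ℓ a :=
    fun h => spl_measure hprec hℓ h
  constructor
  · exact Subrelation.wf (fun {a b} h => key h) (InvImage.wf (mTS prec ℓ) Nat.lt_wfRel.wf)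
  · intro a
    refine ⟨mTS prec ℓ a, ?_⟩
    rintro n ⟨f, hf0, hchain⟩
    have hstep : ∀ i, i ≤ n → mTS prec ℓ (f i) + i ≤ mTS prec ℓ a := by
      intro i
      induction i with
      | zero => intro _; simp [hf0]
      | succ k ihk =>
        intro hk
        have h1 := key (hchain k (by omega))
        have h2 := ihk (by omega)
        omega
    have := hstep n le_rfl
    omega
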